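/- Every matrix M in the multiplicative subgroup of GL₉(ℝ) generated by the two matrices R_z(π/2) and X = R_x(π/2) fixes the reference vector: M · ã = ã. (The octahedral symmetry group of the reference harmonic stabilizes ã.) -/

import Mathlib

open Matrix Real

/-- The reference harmonic coordinates ã = (0,0,0,0,√(7/12),0,0,0,√(5/12)). -/
noncomputable def aref : Fin 9 → ℝ :=
  ![0, 0, 0, 0, Real.sqrt (7/12), 0, 0, 0, Real.sqrt (5/12)]

noncomputable def S1 : Matrix (Fin 9) (Fin 9) ℝ :=
  Real.sqrt 2 • Matrix.diagonal ![28, 7, -8, -17, -20, -17, -8, 7, 28]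

noncomputable def S2 : Matrix (Fin 9) (Fin 9) ℝ :=
  Real.sqrt 3 •
  !![0, 14, 0, 0, 0, 0, 0, 0, 0;
     14, 0, 5*Real.sqrt 7, 0, 0, 0, 0, 0, 0;
     0, 5*Real.sqrt 7, 0, 9, 0, 0, 0, 0, 0;
     0, 0, 9, 0, 0, 0, 0, 0, 0;
     0, 0, 0, 0, 0, 2*Real.sqrt 5, 0, 0, 0;
     0, 0, 0, 0, 2*Real.sqrt 5, 0, 9, 0, 0;
     0, 0, 0, 0, 0, 9, 0, 5*Real.sqrt 7, 0;
     0, 0, 0, 0, 0, 0, 5*Real.sqrt 7, 0, 14;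
     0, 0, 0, 0, 0, 0, 0, 14, 0]

noncomputable def S3 : Matrix (Fin 9) (Fin 9) ℝ :=
  Real.sqrt 3 •
  !![0, 0, 0, 0, 0, 0, 0, 14, 0;
     0, 0, 0, 0, 0, 0, 5*Real.sqrt 7, 0, -14;
     0, 0, 0, 0, 0, 9, 0, -5*Real.sqrt 7, 0;
     0, 0, 0, 0, 2*Real.sqrt 5, 0, -9, 0, 0;
     0, 0, 0, 2*Real.sqrt 5, 0, 0, 0, 0, 0;
     0, 0, 9, 0, 0, 0, 0, 0, 0;
     0, 5*Real.sqrt 7, 0, -9, 0, 0, 0, 0, 0;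
     14, 0, -5*Real.sqrt 7, 0, 0, 0, 0, 0, 0;
     0, -14, 0, 0, 0, 0, 0, 0, 0]

noncomputable def S4 : Matrix (Fin 9) (Fin 9) ℝ :=
  Real.sqrt 6 •
  !![0, 0, 2*Real.sqrt 7, 0, 0, 0, 0, 0, 0;
     0, 0, 0, 3*Real.sqrt 7, 0, 0, 0, 0, 0;
     2*Real.sqrt 7, 0, 0, 0, 0, 0, 0, 0, 0;
     0, 3*Real.sqrt 7, 0, 10, 0, 0, 0, 0, 0;
     0, 0, 0, 0, 0, 0, 6*Real.sqrt 5, 0, 0;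
     0, 0, 0, 0, 0, -10, 0, 3*Real.sqrt 7, 0;
     0, 0, 0, 0, 6*Real.sqrt 5, 0, 0, 0, 2*Real.sqrt 7;
     0, 0, 0, 0, 0, 3*Real.sqrt 7, 0, 0, 0;
     0, 0, 0, 0, 0, 0, 2*Real.sqrt 7, 0, 0]

noncomputable def S5 : Matrix (Fin 9) (Fin 9) ℝ :=
  Real.sqrt 6 •
  !![0, 0, 0, 0, 0, 0, 2*Real.sqrt 7, 0, 0;
     0, 0, 0, 0, 0, 3*Real.sqrt 7, 0, 0, 0;
     0, 0, 0, 0, 6*Real.sqrt 5, 0, 0, 0, -2*Real.sqrt 7;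
     0, 0, 0, 0, 0, -10, 0, -3*Real.sqrt 7, 0;
     0, 0, 6*Real.sqrt 5, 0, 0, 0, 0, 0, 0;
     0, 3*Real.sqrt 7, 0, -10, 0, 0, 0, 0, 0;
     2*Real.sqrt 7, 0, 0, 0, 0, 0, 0, 0, 0;
     0, 0, 0, -3*Real.sqrt 7, 0, 0, 0, 0, 0;
     0, 0, -2*Real.sqrt 7, 0, 0, 0, 0, 0, 0]

/-- The five quadric matrices S₁,…,S₅, indexed by `Fin 5`. -/
noncomputable def S : Fin 5 → Matrix (Fin 9) (Fin 9) ℝ := ![S1, S2, S3, S4, S5]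

/-- Rotation about the z-axis acting on degree-4 spherical harmonic coefficients. -/
noncomputable def Rz (γ : ℝ) : Matrix (Fin 9) (Fin 9) ℝ :=
  !![Real.cos (4*γ), 0, 0, 0, 0, 0, 0, 0, Real.sin (4*γ);
     0, Real.cos (3*γ), 0, 0, 0, 0, 0, Real.sin (3*γ), 0;
     0, 0, Real.cos (2*γ), 0, 0, 0, Real.sin (2*γ), 0, 0;
     0, 0, 0, Real.cos γ, 0, Real.sin γ, 0, 0, 0;
     0, 0, 0, 0, 1, 0, 0, 0, 0;
     0, 0, 0, -Real.sin γ, 0, Real.cos γ, 0, 0, 0;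
     0, 0, -Real.sin (2*γ), 0, 0, 0, Real.cos (2*γ), 0, 0;
     0, -Real.sin (3*γ), 0, 0, 0, 0, 0, Real.cos (3*γ), 0;
     -Real.sin (4*γ), 0, 0, 0, 0, 0, 0, 0, Real.cos (4*γ)]

/-- The quarter-turn about the x-axis, X = R_x(π/2). -/
noncomputable def Xmat : Matrix (Fin 9) (Fin 9) ℝ :=
  (1/8 : ℝ) •
  !![0, 0, 0, 0, 0, 2*Real.sqrt 14, 0, -2*Real.sqrt 2, 0;
     0, -6, 0, 2*Real.sqrt 7, 0, 0, 0, 0, 0;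
     0, 0, 0, 0, 0, 2*Real.sqrt 2, 0, 2*Real.sqrt 14, 0;
     0, 2*Real.sqrt 7, 0, 6, 0, 0, 0, 0, 0;
     0, 0, 0, 0, 3, 0, 2*Real.sqrt 5, 0, Real.sqrt 35;
     -2*Real.sqrt 14, 0, -2*Real.sqrt 2, 0, 0, 0, 0, 0, 0;
     0, 0, 0, 0, 2*Real.sqrt 5, 0, 4, 0, -2*Real.sqrt 7;
     2*Real.sqrt 2, 0, -2*Real.sqrt 14, 0, 0, 0, 0, 0, 0;
     0, 0, 0, 0, Real.sqrt 35, 0, -2*Real.sqrt 7, 0, 1]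

/-- Rotation about the y-axis: R_y(β) = X · R_z(β) · Xᵀ. -/
noncomputable def Ry (β : ℝ) : Matrix (Fin 9) (Fin 9) ℝ := Xmat * Rz β * Xmatᵀ

/-- Rotation about the x-axis: R_x(α) = R_y(π/2)ᵀ · R_z(α) · R_y(π/2). -/
noncomputable def Rx (α : ℝ) : Matrix (Fin 9) (Fin 9) ℝ :=
  (Ry (Real.pi/2))ᵀ * Rz α * Ry (Real.pi/2)

/-- The deviation measure d(a) = Σₖ (aᵀ Sₖ a)². -/
noncomputable def dmeas (a : Fin 9 → ℝ) : ℝ :=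
  ∑ k : Fin 5, (a ⬝ᵥ (S k).mulVec a) ^ 2

lemma sqrt_mul_sqrt (a b c d : ℝ) (ha : 0 ≤ a) (hd : 0 ≤ d)
    (h : a * b = d ^ 2 * c) (hb : 0 ≤ b) :
    Real.sqrt a * Real.sqrt b = d * Real.sqrt c := by
  rw [← Real.sqrt_mul ha, h, Real.sqrt_mul (sq_nonneg d), Real.sqrt_sq hd]

lemma key1 : Real.sqrt 35 * Real.sqrt 5 = 5 * Real.sqrt 7 :=
  sqrt_mul_sqrt 35 5 7 5 (by norm_num) (by norm_num) (by norm_num) (by norm_num)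

lemma key2 : Real.sqrt 35 * Real.sqrt 7 = 7 * Real.sqrt 5 :=
  sqrt_mul_sqrt 35 7 5 7 (by norm_num) (by norm_num) (by norm_num) (by norm_num)

lemma Xmat_fix : Xmat.mulVec aref = aref := by
  simp only [Xmat, aref, Matrix.smul_mulVec, Matrix.cons_mulVec,
    Matrix.cons_dotProduct, Matrix.dotProduct_of_isEmpty, Matrix.empty_mulVec,
    Matrix.smul_cons, Matrix.smul_empty, smul_eq_mul, Matrix.head_cons, Matrix.tail_cons]
  simp only [Matrix.vecCons, Fin.cons_inj, and_true]
  norm_num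
  refine ⟨?_, ?_, ?_⟩
  · linear_combination (Real.sqrt 12)⁻¹ / 8 * key1
  · ring
  · linear_combination (Real.sqrt 12)⁻¹ / 8 * key2

lemma Rz_fix : (Rz (Real.pi/2)).mulVec aref = aref := by
  simp only [Rz, aref, Matrix.cons_mulVec,
    Matrix.cons_dotProduct, Matrix.dotProduct_of_isEmpty, Matrix.empty_mulVec,
    Matrix.head_cons, Matrix.tail_cons]
  simp only [show (4:ℝ) * (Real.pi/2) = 2 * Real.pi by ring,
    Real.sin_two_pi, Real.cos_two_pi]
  simp only [Matrix.vecCons, Fin.cons_inj, and_true]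
  norm_num

/-- every element of the subgroup of GL₉(ℝ) generated by R_z(π/2) and X
fixes the reference vector ã. -/
theorem stmt_16 (M : GL (Fin 9) ℝ)
    (hM : M ∈ Subgroup.closure
      {w : GL (Fin 9) ℝ | (w : Matrix (Fin 9) (Fin 9) ℝ) = Rz (Real.pi/2) ∨
                          (w : Matrix (Fin 9) (Fin 9) ℝ) = Xmat}) :
    (M : Matrix (Fin 9) (Fin 9) ℝ).mulVec aref = aref := by
  induction hM using Subgroup.closure_induction with
  | mem w hw =>
    rcases hw with h | h <;> rw [h]
    · exact Rz_fix
    · exact Xmat_fix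
  | one => simp
  | mul x y _ _ ihx ihy =>
    rw [Units.val_mul, ← Matrix.mulVec_mulVec, ihy, ihx]
  | inv x _ ih =>
    have h : ((x⁻¹ : GL (Fin 9) ℝ) : Matrix (Fin 9) (Fin 9) ℝ).mulVec
        ((x : Matrix (Fin 9) (Fin 9) ℝ).mulVec aref) = aref := by
      rw [Matrix.mulVec_mulVec, ← Units.val_mul, inv_mul_cancel]
      simp
    rwa [ih] at h
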